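/- arXiv:2312.04351 — 3 statements merged into one kernel-verified Lean document; each statement's English description precedes it below -/
import Mathlib

section
/- Let v₁ > v₂ > v₃ ≥ 0 and suppose positive reals Y'₁, …, Y'_θ (summing to 1, with Y'_{θ-1} > Y'_θ the two smallest) satisfy the risky-bidding condition (v₁ − v₂)/(v₂ − v₃) < (Y'_{θ-1} − Y'_θ)/(1 − Y'_{θ-1} − Y'_θ). Then the risky-bidding revenue satisfies (1 − Y'_{θ-1} − Y'_θ)·v₁ + (Y'_{θ-1} + Y'_θ)·v₃ < ((Y'_{θ-1}+Y'_θ)(1 − 2Y'_θ)·v₂ − 2Y'_θ(1 − Y'_{θ-1} − Y'_θ)·v₁)/(Y'_{θ-1} − Y'_θ). -/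
/-- Lemma 1, supremum lemma: under the risky-bidding condition,
the risky revenue is bounded above by the stated expression. -/
theorem stmt4 (θ : ℕ) (hθ : 3 ≤ θ) (v₁ v₂ v₃ : ℝ)
    (h3 : 0 ≤ v₃) (h32 : v₃ < v₂) (h21 : v₂ < v₁)
    (Y : ℕ → ℝ)
    (hpos : ∀ i ∈ Finset.Icc 1 θ, 0 < Y i)
    (hsum : ∑ i ∈ Finset.Icc 1 θ, Y i = 1)
    (hsmall : ∀ i, 1 ≤ i → i ≤ θ - 2 → Y (θ - 1) < Y i ∧ Y θ < Y i)
    (horder : Y θ < Y (θ - 1))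
    (hrisky : (v₁ - v₂) / (v₂ - v₃) <
      (Y (θ - 1) - Y θ) / (1 - Y (θ - 1) - Y θ)) :
    (1 - Y (θ - 1) - Y θ) * v₁ + (Y (θ - 1) + Y θ) * v₃ <
      ((Y (θ - 1) + Y θ) * (1 - 2 * Y θ) * v₂
        - 2 * Y θ * (1 - Y (θ - 1) - Y θ) * v₁) / (Y (θ - 1) - Y θ) := by
  have h1mem : (1 : ℕ) ∈ Finset.Icc 1 θ := by simp; omega
  have hθ1mem : θ - 1 ∈ Finset.Icc 1 θ := by simp; omega
  have hθmem : θ ∈ Finset.Icc 1 θ := by simp; omega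
  have hsub : ({1, θ - 1, θ} : Finset ℕ) ⊆ Finset.Icc 1 θ := by
    intro i hi
    simp at hi
    rcases hi with h | h | h <;> simp [h] <;> omega
  have hne1 : (1 : ℕ) ≠ θ - 1 := by omega
  have hne2 : (1 : ℕ) ≠ θ := by omega
  have hne3 : θ - 1 ≠ θ := by omega
  have hsum3 : ∑ i ∈ ({1, θ - 1, θ} : Finset ℕ), Y i = Y 1 + Y (θ - 1) + Y θ := by
    rw [Finset.sum_insert (by simp [hne1, hne2]),
        Finset.sum_insert (by simp [hne3]), Finset.sum_singleton]
    ring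
  have hle : Y 1 + Y (θ - 1) + Y θ ≤ 1 := by
    rw [← hsum, ← hsum3]
    exact Finset.sum_le_sum_of_subset_of_nonneg hsub
      (fun i hi _ => (hpos i hi).le)
  have hY1 : 0 < Y 1 := hpos 1 h1mem
  have hS : 0 < 1 - Y (θ - 1) - Y θ := by linarith
  have hab : 0 < Y (θ - 1) - Y θ := by linarith
  have habp : 0 < Y (θ - 1) + Y θ := by
    have := hpos θ hθmem; have := hpos (θ - 1) hθ1mem; linarith
  have hcross : (v₁ - v₂) * (1 - Y (θ - 1) - Y θ) < (Y (θ - 1) - Y θ) * (v₂ - v₃) :=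
    (div_lt_div_iff₀ (by linarith) hS).mp hrisky
  rw [lt_div_iff₀ hab]
  nlinarith [mul_pos habp (sub_pos.mpr hcross)]
end

section
/- Let v₁ > v₂ > v₃ ≥ 0 with (v₁−v₂)/(v₂−v₃) < 1/(θ−2) for some integer θ ≥ 3. Suppose Y₁,…,Y_θ are positive reals summing to 1 (with Y_{θ-1}, Y_θ the two smallest) satisfying (v₁−v₂)/(v₂−v₃) > (Y_{θ-1}+Y_θ)/(1−Y_{θ-1}−Y_θ). Then there exist positive reals Y'₁,…,Y'_θ summing to 1, with Y'_{θ-1} > Y'_θ the two smallest, satisfying (v₁−v₂)/(v₂−v₃) < (Y'_{θ-1}−Y'_θ)/(1−Y'_{θ-1}−Y'_θ), and such that (1−Y'_{θ-1}−Y'_θ)v₁ + (Y'_{θ-1}+Y'_θ)v₃ > (1−Y_{θ-1}−Y_θ)v₂ + (Y_{θ-1}+Y_θ)v₃. -/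
set_option maxHeartbeats 1000000

/-- Lemma 3, case (ii): from a truthful-equilibrium setting Y
with small tail mass one can construct a risky-equilibrium setting Y' with
strictly better revenue. -/
theorem stmt7 (θ : ℕ) (hθ : 3 ≤ θ) (v₁ v₂ v₃ : ℝ)
    (h3 : 0 ≤ v₃) (h32 : v₃ < v₂) (h21 : v₂ < v₁)
    (hgap : (v₁ - v₂) / (v₂ - v₃) < 1 / ((θ : ℝ) - 2))
    (Y : ℕ → ℝ)
    (hpos : ∀ i ∈ Finset.Icc 1 θ, 0 < Y i)
    (hsum : ∑ i ∈ Finset.Icc 1 θ, Y i = 1)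
    (hsmall : ∀ i, 1 ≤ i → i ≤ θ - 2 → Y (θ - 1) < Y i ∧ Y θ < Y i)
    (hsmalltail : (v₁ - v₂) / (v₂ - v₃) > (Y (θ - 1) + Y θ) / (1 - Y (θ - 1) - Y θ)) :
    ∃ Y' : ℕ → ℝ,
      (∀ i ∈ Finset.Icc 1 θ, 0 < Y' i) ∧
      (∑ i ∈ Finset.Icc 1 θ, Y' i = 1) ∧
      (∀ i, 1 ≤ i → i ≤ θ - 2 → Y' (θ - 1) < Y' i ∧ Y' θ < Y' i) ∧
      Y' θ < Y' (θ - 1) ∧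
      (v₁ - v₂) / (v₂ - v₃) < (Y' (θ - 1) - Y' θ) / (1 - Y' (θ - 1) - Y' θ) ∧
      (1 - Y' (θ - 1) - Y' θ) * v₁ + (Y' (θ - 1) + Y' θ) * v₃ >
        (1 - Y (θ - 1) - Y θ) * v₂ + (Y (θ - 1) + Y θ) * v₃ := by
  obtain ⟨k, rfl⟩ : ∃ k, θ = k + 3 := ⟨θ - 3, by omega⟩
  have e1 : k + 3 - 1 = k + 2 := by omega
  have e2 : k + 3 - 2 = k + 1 := by omega
  simp only [e1, e2] at hsmall hsmalltail ⊢
  have hv12 : (0:ℝ) < v₁ - v₂ := by linarith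
  have hv23 : (0:ℝ) < v₂ - v₃ := by linarith
  have hv13 : (0:ℝ) < v₁ - v₃ := by linarith
  have hk1 : (0:ℝ) < (k:ℝ) + 1 := by positivity
  have hk2 : (0:ℝ) < (k:ℝ) + 2 := by positivity
  have hkc : ((k + 3 : ℕ) : ℝ) - 2 = (k:ℝ) + 1 := by push_cast; ring
  rw [hkc] at hgap
  have hgap' : (v₁ - v₂) * ((k:ℝ) + 1) < v₂ - v₃ := by
    have := (div_lt_div_iff₀ hv23 hk1).1 hgap
    linarith
  set q : ℝ := (v₁ - v₂) / (v₁ - v₃) with hqdef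
  clear_value q
  set r : ℝ := (v₁ - v₂) / (v₂ - v₃) with hrdef
  clear_value r
  have hq0 : 0 < q := by rw [hqdef]; exact div_pos hv12 hv13
  have hr0 : 0 < r := by rw [hrdef]; exact div_pos hv12 hv23
  have hqmul : q * (v₁ - v₃) = v₁ - v₂ := by
    rw [hqdef]; exact div_mul_cancel₀ _ (ne_of_gt hv13)
  have hq1 : q < 1 := by rw [hqdef]; exact (div_lt_one hv13).2 (by linarith)
  have hqk : q * ((k:ℝ) + 2) < 1 := by
    rw [hqdef, div_mul_eq_mul_div, div_lt_one hv13]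
    have hid : (v₁ - v₂) * ((k:ℝ) + 2) = (v₁ - v₂) * ((k:ℝ) + 1) + (v₁ - v₂) := by ring
    linarith
  set S : ℝ := Y (k + 2) + Y (k + 3) with hSdef
  clear_value S
  have h1m : 1 ∈ Finset.Icc 1 (k + 3) := by simp
  have h2m : k + 2 ∈ Finset.Icc 1 (k + 3) := by simp
  have h3m : k + 3 ∈ Finset.Icc 1 (k + 3) := by simp
  have hS0 : 0 < S := by
    have := hpos _ h2m; have := hpos _ h3m; rw [hSdef]; linarith
  have hS1 : S < 1 := by
    have hsub : ({1, k + 2, k + 3} : Finset ℕ) ⊆ Finset.Icc 1 (k + 3) := by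
      intro x hx; simp at hx; rcases hx with h | h | h <;> simp [h]
    have hle : ∑ i ∈ ({1, k + 2, k + 3} : Finset ℕ), Y i ≤ ∑ i ∈ Finset.Icc 1 (k + 3), Y i :=
      Finset.sum_le_sum_of_subset_of_nonneg hsub (fun i hi _ => (hpos i hi).le)
    have h12 : (1 : ℕ) ≠ k + 2 := by omega
    have h13 : (1 : ℕ) ≠ k + 3 := by omega
    have h23 : k + 2 ≠ k + 3 := by omega
    rw [Finset.sum_insert (by simp [h12, h13]),
        Finset.sum_insert (by simp [h23]), Finset.sum_singleton, hsum] at hle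
    have := hpos _ h1m
    rw [hSdef]; linarith
  have h1S : (0:ℝ) < 1 - S := by linarith
  have hden : 1 - Y (k + 2) - Y (k + 3) = 1 - S := by rw [hSdef]; ring
  rw [hden] at hsmalltail
  have hst : S * (v₂ - v₃) < (v₁ - v₂) * (1 - S) := by
    rw [hrdef] at hsmalltail
    have h := (div_lt_div_iff₀ h1S hv23).1 hsmalltail
    linarith
  have hSq : S < q := by
    rw [hqdef, lt_div_iff₀ hv13]
    have hid1 : S * (v₁ - v₃) = S * (v₁ - v₂) + S * (v₂ - v₃) := by ring
    have hid2 : (v₁ - v₂) * (1 - S) = (v₁ - v₂) - S * (v₁ - v₂) := by ring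
    linarith
  set M : ℝ := min (S + (1 - S) * q) (1 / ((k:ℝ) + 2)) with hMdef
  clear_value M
  have hqM : q < M := by
    rw [hMdef]
    apply lt_min
    · have hid : S + (1 - S) * q - q = S * (1 - q) := by ring
      have hp : 0 < S * (1 - q) := mul_pos hS0 (by linarith)
      linarith
    · rw [lt_div_iff₀ hk2]; exact hqk
  set S' : ℝ := (q + M) / 2 with hS'def
  clear_value S'
  have hS'q : q < S' := by rw [hS'def]; linarith
  have hS'M : S' < M := by rw [hS'def]; linarith
  have hS'le2 : S' < 1 / ((k:ℝ) + 2) := lt_of_lt_of_le hS'M (hMdef ▸ min_le_right _ _)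
  have hS'0 : 0 < S' := lt_trans hq0 hS'q
  have hS'k2 : S' * ((k:ℝ) + 2) < 1 := (lt_div_iff₀ hk2).1 hS'le2
  have hS'1 : S' < 1 := by
    have hm : 0 ≤ S' * (k:ℝ) := mul_nonneg hS'0.le (Nat.cast_nonneg k)
    have he : S' * ((k:ℝ)+2) = S'*(k:ℝ) + 2*S' := by ring
    linarith
  have h1S' : (0:ℝ) < 1 - S' := by linarith
  set a : ℝ := (1 - S') / ((k:ℝ) + 1) with hadef
  clear_value a
  have ha0 : 0 < a := by rw [hadef]; exact div_pos h1S' hk1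
  have hS'a : S' < a := by
    rw [hadef, lt_div_iff₀ hk1]
    have he : S' * ((k:ℝ)+2) = S' * ((k:ℝ)+1) + S' := by ring
    linarith
  have hqS'mul : v₁ - v₂ < S' * (v₁ - v₃) := by
    have := hS'q; rw [hqdef] at this; exact (div_lt_iff₀ hv13).1 this
  have hrS' : r * (1 - S') < S' := by
    rw [hrdef, div_mul_eq_mul_div, div_lt_iff₀ hv23]
    have hid1 : S' * (v₁ - v₃) = S' * (v₁ - v₂) + S' * (v₂ - v₃) := by ring
    have hid2 : (v₁ - v₂) * (1 - S') = (v₁ - v₂) - S' * (v₁ - v₂) := by ring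
    linarith
  set c : ℝ := (S' - r * (1 - S')) / 4 with hcdef
  clear_value c
  have hc0 : 0 < c := by rw [hcdef]; linarith
  set b : ℝ := S' - c with hbdef
  clear_value b
  have hbc : r * (1 - S') < b - c := by rw [hbdef, hcdef]; linarith
  have hr1S' : 0 < r * (1 - S') := mul_pos hr0 h1S'
  have hcb : c < b := by linarith
  have hb0 : 0 < b := lt_trans hc0 hcb
  have hba : b < a := by rw [hbdef]; linarith
  have hca : c < a := lt_trans hcb hba
  have hbcS : b + c = S' := by rw [hbdef]; ring
  have hne : ¬(k + 3 = k + 2) := by omega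
  refine ⟨fun i => if i = k + 2 then b else if i = k + 3 then c else a, ?_, ?_, ?_, ?_, ?_, ?_⟩
  · intro i _
    by_cases h1 : i = k + 2
    · simpa [h1] using hb0
    · by_cases h2 : i = k + 3
      · simpa [h1, h2] using hc0
      · simpa [h1, h2] using ha0
  · rw [show k + 3 = (k + 2) + 1 from rfl, Finset.sum_Icc_succ_top (by omega),
       show k + 2 = (k + 1) + 1 from rfl, Finset.sum_Icc_succ_top (by omega)]
    have hconst : ∑ i ∈ Finset.Icc 1 (k + 1),
        (if i = k + 2 then b else if i = k + 3 then c else a) =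
        ∑ i ∈ Finset.Icc 1 (k + 1), a := by
      apply Finset.sum_congr rfl
      intro i hi
      simp only [Finset.mem_Icc] at hi
      have h1 : i ≠ k + 2 := by omega
      have h2 : i ≠ k + 3 := by omega
      simp [h1, h2]
    rw [hconst, Finset.sum_const, Nat.card_Icc,
        show k + 1 + 1 - 1 = k + 1 from by omega,
        show k + 1 + 1 = k + 2 from by omega, show k + 2 + 1 = k + 3 from by omega,
        nsmul_eq_mul]
    simp only [eq_self_iff_true, if_true, if_neg hne]
    have hmul : ((k + 1 : ℕ) : ℝ) * a = 1 - S' := by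
      rw [hadef]; push_cast; field_simp
    rw [hmul]; linarith
  · intro i hi1 hi2
    have h1 : i ≠ k + 2 := by omega
    have h2 : i ≠ k + 3 := by omega
    simp only [eq_self_iff_true, if_true, if_neg hne, if_neg h1, if_neg h2]
    exact ⟨hba, hca⟩
  · simp only [eq_self_iff_true, if_true, if_neg hne]
    exact hcb
  · simp only [eq_self_iff_true, if_true, if_neg hne]
    have hbc1 : 1 - b - c = 1 - S' := by rw [← hbcS]; ring
    rw [hbc1, lt_div_iff₀ h1S']
    exact hbc
  · simp only [eq_self_iff_true, if_true, if_neg hne]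
    have hbc1 : 1 - b - c = 1 - S' := by rw [← hbcS]; ring
    rw [hbc1, hbcS, hden]
    have hS'S : S' - S < (1 - S) * q := by
      have : S' < S + (1 - S) * q := lt_of_lt_of_le hS'M (hMdef ▸ min_le_left _ _)
      linarith
    have key : (S' - S) * (v₁ - v₃) < (1 - S) * (v₁ - v₂) := by
      have h1 := mul_lt_mul_of_pos_right hS'S hv13
      have h2 : (1 - S) * q * (v₁ - v₃) = (1 - S) * (v₁ - v₂) := by
        rw [mul_assoc, hqmul]
      linarith
    have hid : (1 - S') * v₁ + S' * v₃ - ((1 - S) * v₂ + S * v₃)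
        = (1 - S) * (v₁ - v₂) - (S' - S) * (v₁ - v₃) := by ring
    linarith
end

section
/- Consider the two-round auction mode N_{1,1} with θ ≥ 3, valuations v₁ > v₂ > v₃ > 0, and positive probabilities Y₁,…,Y_θ summing to 1 with Y_i > Y_{θ-1} > Y_θ (i ≤ θ−2). If (v₁−v₂)/(v₂−v₃) > (Y_{θ-1}−Y_θ)/(∑_{i=1}^{θ-2}Y_i), then truthful bidding Rank[1,2,3,…,θ] is a Nash equilibrium: the v₂-bidder prefers rank 2 to rank 1, i.e., Y_θ(v₂−v₃) > (∑_{i=1}^{θ-2}Y_i)(v₂−v₁) + Y_{θ-1}(v₂−v₃), and the v₁-bidder prefers rank 1 to rank 2, i.e., (∑_{i=1}^{θ-2}Y_i)(v₁−v₂) + Y_{θ-1}(v₁−v₃) > Y_θ(v₁−v₃). -/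
/-- in mode N_{1,1}, if (v₁−v₂)/(v₂−v₃) exceeds the threshold
ratio then truthful bidding Rank[1,2,3,…,θ] is a Nash equilibrium. -/
theorem stmt15 (θ : ℕ) (hθ : 3 ≤ θ) (v₁ v₂ v₃ : ℝ)
    (h3 : 0 < v₃) (h32 : v₃ < v₂) (h21 : v₂ < v₁)
    (Y : ℕ → ℝ)
    (hpos : ∀ i ∈ Finset.Icc 1 θ, 0 < Y i)
    (hsum : ∑ i ∈ Finset.Icc 1 θ, Y i = 1)
    (hsmall : ∀ i, 1 ≤ i → i ≤ θ - 2 → Y (θ - 1) < Y i ∧ Y θ < Y i)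
    (horder : Y θ < Y (θ - 1))
    (htruth : (v₁ - v₂) / (v₂ - v₃) >
      (Y (θ - 1) - Y θ) / (∑ i ∈ Finset.Icc 1 (θ - 2), Y i)) :
    Y θ * (v₂ - v₃) >
        (∑ i ∈ Finset.Icc 1 (θ - 2), Y i) * (v₂ - v₁) + Y (θ - 1) * (v₂ - v₃) ∧
      (∑ i ∈ Finset.Icc 1 (θ - 2), Y i) * (v₁ - v₂) + Y (θ - 1) * (v₁ - v₃) >
        Y θ * (v₁ - v₃) := by
  set S := ∑ i ∈ Finset.Icc 1 (θ - 2), Y i with hS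
  have hSpos : 0 < S := by
    apply Finset.sum_pos
    · intro i hi
      simp only [Finset.mem_Icc] at hi
      exact hpos i (Finset.mem_Icc.mpr ⟨hi.1, hi.2.trans (Nat.sub_le θ 2)⟩)
    · exact ⟨1, Finset.mem_Icc.mpr ⟨le_refl 1, by omega⟩⟩
  have hkey : S * (v₁ - v₂) > (Y (θ - 1) - Y θ) * (v₂ - v₃) := by
    have h23 : 0 < v₂ - v₃ := by linarith
    rw [gt_iff_lt, div_lt_div_iff₀ hSpos h23] at htruth
    nlinarith
  constructor
  · nlinarith
  · nlinarith [mul_pos hSpos (sub_pos.mpr h21)]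
end
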